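/- Let H be infinite-dimensional separable, (eₙ) an orthonormal basis of H, and define A on H ⊕ H by A(x,y) = (x, Σₙ ⟨y,eₙ⟩ 2⁻ⁿ eₙ). Let V = {(x,y) : x = 0} = 0 ⊕ H. Then A is bounded, nonnegative, with dense range in H ⊕ H, the orthogonal projection P_V onto V does NOT belong to 𝓛₊(A), yet the unitary U(x,y) = (y,x) maps V into the range of A. -/

import Mathlib

open scoped InnerProductSpace ENNReal

noncomputable section

namespace LplusAux

variable {H : Type*} [NormedAddCommGroup H] [InnerProductSpace ℂ H] [CompleteSpace H]

/-- coefficient sequence of `D y`. -/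
def coeffs (e : HilbertBasis ℕ ℂ H) (y : H) : ℕ → ℂ :=
  fun n => ((2 : ℂ) ^ (n + 1))⁻¹ * ⟪e n, y⟫_ℂ

/-- the diagonal operator value. -/
def D (e : HilbertBasis ℕ ℂ H) (y : H) : H :=
  ∑' n : ℕ, (((2 : ℂ) ^ (n + 1))⁻¹ * ⟪e n, y⟫_ℂ) • e n

lemma norm_coeffs_le (e : HilbertBasis ℕ ℂ H) (y : H) (n : ℕ) :
    ‖coeffs e y n‖ ≤ ‖e.repr y n‖ := by
  rw [coeffs, norm_mul, e.repr_apply_apply]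
  have h1 : ‖((2 : ℂ) ^ (n + 1))⁻¹‖ ≤ 1 := by
    rw [norm_inv, norm_pow, Complex.norm_ofNat]
    rw [inv_le_one_iff₀]
    right
    exact one_le_pow₀ one_le_two
  calc ‖((2 : ℂ) ^ (n + 1))⁻¹‖ * ‖⟪e n, y⟫_ℂ‖ ≤ 1 * ‖⟪e n, y⟫_ℂ‖ :=
        mul_le_mul_of_nonneg_right h1 (norm_nonneg _)
    _ = ‖⟪e n, y⟫_ℂ‖ := one_mul _

lemma memℓp_coeffs (e : HilbertBasis ℕ ℂ H) (y : H) : Memℓp (coeffs e y) 2 := by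
  have h : Memℓp (fun n => e.repr y n) 2 := lp.memℓp (e.repr y)
  have hs : Summable fun n => ‖e.repr y n‖ ^ (2 : ℝ≥0∞).toReal :=
    (memℓp_gen_iff (by norm_num)).mp h
  refine memℓp_gen (Summable.of_nonneg_of_le (fun n => ?_) (fun n => ?_) hs)
  · positivity
  · exact Real.rpow_le_rpow (norm_nonneg _) (norm_coeffs_le e y n)
      ENNReal.toReal_nonneg

lemma hasSum_D (e : HilbertBasis ℕ ℂ H) (y : H) :
    HasSum (fun n => (((2 : ℂ) ^ (n + 1))⁻¹ * ⟪e n, y⟫_ℂ) • e n) (D e y) := by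
  have h := e.hasSum_repr_symm ⟨coeffs e y, memℓp_coeffs e y⟩
  have h2 : HasSum (fun n => (((2 : ℂ) ^ (n + 1))⁻¹ * ⟪e n, y⟫_ℂ) • e n)
      (e.repr.symm ⟨coeffs e y, memℓp_coeffs e y⟩) := h
  exact h2.summable.hasSum

lemma inner_D_right (e : HilbertBasis ℕ ℂ H) (y z : H) :
    ⟪z, D e y⟫_ℂ = ∑' n : ℕ, (((2 : ℂ) ^ (n + 1))⁻¹ * ⟪e n, y⟫_ℂ) * ⟪z, e n⟫_ℂ := by
  have h := (hasSum_D e y).mapL (innerSL ℂ z)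
  simp only [innerSL_apply_apply, inner_smul_right] at h
  exact h.tsum_eq.symm

lemma hasSum_inner_D_right (e : HilbertBasis ℕ ℂ H) (y z : H) :
    HasSum (fun n : ℕ => (((2 : ℂ) ^ (n + 1))⁻¹ * ⟪e n, y⟫_ℂ) * ⟪z, e n⟫_ℂ)
      ⟪z, D e y⟫_ℂ := by
  have h := (hasSum_D e y).mapL (innerSL ℂ z)
  simpa only [innerSL_apply_apply, inner_smul_right] using h

lemma inner_D_symm (e : HilbertBasis ℕ ℂ H) (y z : H) :
    ⟪D e y, z⟫_ℂ = ⟪y, D e z⟫_ℂ := by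
  have h := (hasSum_inner_D_right e y z).star
  have h2 : HasSum (fun n : ℕ =>
      star ((((2 : ℂ) ^ (n + 1))⁻¹ * ⟪e n, y⟫_ℂ) * ⟪z, e n⟫_ℂ)) ⟪D e y, z⟫_ℂ := by
    simpa only [Complex.star_def, inner_conj_symm] using h
  rw [← h2.tsum_eq, inner_D_right e z y]
  refine tsum_congr fun n => ?_
  simp only [star_mul', star_inv₀, star_pow]
  rw [Complex.star_def, Complex.conj_ofNat, inner_conj_symm, inner_conj_symm]
  ring

lemma re_inner_D_nonneg (e : HilbertBasis ℕ ℂ H) (y : H) :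
    0 ≤ Complex.re ⟪y, D e y⟫_ℂ := by
  have h := (hasSum_inner_D_right e y y).mapL Complex.reCLM
  have ht := h.tsum_eq
  simp only [Complex.reCLM_apply] at ht
  rw [← ht]
  refine tsum_nonneg fun n => ?_
  have h1 : ⟪y, e n⟫_ℂ = (starRingEnd ℂ) ⟪e n, y⟫_ℂ := (inner_conj_symm _ _).symm
  have h2 : ((2 : ℂ) ^ (n + 1))⁻¹ = ((((2 : ℝ) ^ (n + 1))⁻¹ : ℝ) : ℂ) := by
    push_cast; ring
  rw [h1, mul_assoc, Complex.mul_conj, h2, ← Complex.ofReal_mul, Complex.ofReal_re]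
  exact mul_nonneg (by positivity) (Complex.normSq_nonneg _)

lemma D_basis (e : HilbertBasis ℕ ℂ H) (k : ℕ) :
    D e (e k) = ((2 : ℂ) ^ (k + 1))⁻¹ • e k := by
  have ho := orthonormal_iff_ite.mp e.orthonormal
  rw [D, tsum_eq_single k]
  · rw [ho k k]; simp
  · intro n hn
    rw [ho n k, if_neg hn]
    simp

lemma D_zero (e : HilbertBasis ℕ ℂ H) : D e 0 = 0 := by
  simp [D]

lemma D_smul_basis (e : HilbertBasis ℕ ℂ H) (k : ℕ) :
    D e (((2 : ℂ) ^ (k + 1)) • e k) = e k := by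
  have ho := orthonormal_iff_ite.mp e.orthonormal
  rw [D, tsum_eq_single k]
  · rw [inner_smul_right, ho k k]
    simp only [if_true, mul_one]
    rw [inv_mul_cancel₀ (by norm_num : ((2:ℂ)^(k+1)) ≠ 0), one_smul]
  · intro n hn
    rw [inner_smul_right, ho n k, if_neg hn]
    simp

end LplusAux

open scoped InnerProductSpace

/-- `L₊(A)`: the cone of nonnegative operators dominated by a positive multiple of `A`. -/
def Lplus {E : Type*} [NormedAddCommGroup E] [InnerProductSpace ℂ E] [CompleteSpace E]
    (A : E →L[ℂ] E) : Set (E →L[ℂ] E) :=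
  {B | B.IsPositive ∧ ∃ c : ℝ, 0 < c ∧ (c • A - B).IsPositive}

/-- Let `H` be infinite-dimensional separable with orthonormal basis `(eₙ)`, and on
`H ⊕ H` (with the ℓ²-inner product) let `A(x,y) = (x, Σₙ 2⁻ⁿ⟨eₙ,y⟩eₙ)`, `V = 0 ⊕ H`,
`P = P_V` the orthogonal projection onto `V`, and `U(x,y) = (y,x)` the swap unitary. Then
`A` is nonnegative with dense range, `P ∉ 𝓛₊(A)`, yet `U` maps `V` into the range of `A`. -/
theorem projection_not_mem_closure_Lplus_example
    {H : Type*} [NormedAddCommGroup H] [InnerProductSpace ℂ H] [CompleteSpace H]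
    [TopologicalSpace.SeparableSpace H] (hinf : ¬ FiniteDimensional ℂ H)
    (e : HilbertBasis ℕ ℂ H)
    (A : WithLp 2 (H × H) →L[ℂ] WithLp 2 (H × H))
    (hA : ∀ x y : H, A ((WithLp.equiv 2 (H × H)).symm (x, y)) =
      (WithLp.equiv 2 (H × H)).symm
        (x, ∑' n : ℕ, (((2 : ℂ) ^ (n + 1))⁻¹ * ⟪e n, y⟫_ℂ) • e n))
    (V : Submodule ℂ (WithLp 2 (H × H)))
    (hV : ∀ p : WithLp 2 (H × H), p ∈ V ↔ ((WithLp.equiv 2 (H × H)) p).1 = 0)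
    (P : WithLp 2 (H × H) →L[ℂ] WithLp 2 (H × H))
    (hPsa : IsSelfAdjoint P) (hPidem : P ∘L P = P) (hPrange : LinearMap.range (P : WithLp 2 (H × H) →ₗ[ℂ] WithLp 2 (H × H)) = V)
    (U : WithLp 2 (H × H) ≃ₗᵢ[ℂ] WithLp 2 (H × H))
    (hU : ∀ x y : H, U ((WithLp.equiv 2 (H × H)).symm (x, y)) =
      (WithLp.equiv 2 (H × H)).symm (y, x)) :
    A.IsPositive ∧ DenseRange ⇑A ∧
      P ∉ closure (Lplus A) ∧
      ∀ v ∈ V, U v ∈ LinearMap.range (A : WithLp 2 (H × H) →ₗ[ℂ] WithLp 2 (H × H)) := by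
  classical
  have hA' : ∀ x y : H, A ((WithLp.equiv 2 (H × H)).symm (x, y)) =
      (WithLp.equiv 2 (H × H)).symm (x, LplusAux.D e y) := hA
  have hp_eq : ∀ p : WithLp 2 (H × H),
      p = (WithLp.equiv 2 (H × H)).symm
        (((WithLp.equiv 2 (H × H)) p).1, ((WithLp.equiv 2 (H × H)) p).2) := by
    intro p; rfl
  have hinner : ∀ a b c d : H,
      ⟪(WithLp.equiv 2 (H × H)).symm (a, b), (WithLp.equiv 2 (H × H)).symm (c, d)⟫_ℂ
        = ⟪a, c⟫_ℂ + ⟪b, d⟫_ℂ := by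
    intro a b c d
    rw [WithLp.prod_inner_apply]
    rfl
  -- A is positive
  have hApos : A.IsPositive := by
    constructor
    · intro p q
      simp only [ContinuousLinearMap.coe_coe]
      rw [hp_eq p, hp_eq q, hA', hA', hinner, hinner, LplusAux.inner_D_symm]
    · intro p
      rw [ContinuousLinearMap.reApplyInnerSelf]
      rw [hp_eq p, hA', hinner]
      rw [map_add]
      refine add_nonneg inner_self_nonneg ?_
      rw [LplusAux.inner_D_symm]
      exact LplusAux.re_inner_D_nonneg e _
  refine ⟨hApos, ?_, ?_, ?_⟩
  -- dense range
  · set J : H →L[ℂ] WithLp 2 (H × H) :=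
      ((WithLp.prodContinuousLinearEquiv 2 ℂ H H).symm :
        (H × H) →L[ℂ] WithLp 2 (H × H)).comp (ContinuousLinearMap.inr ℂ H H) with hJdef
    have hJ : ∀ y : H, J y = (WithLp.equiv 2 (H × H)).symm (0, y) := by
      intro y
      simp [hJdef]
    have hxr : ∀ x : H, (WithLp.equiv 2 (H × H)).symm (x, 0) ∈ LinearMap.range (A : WithLp 2 (H × H) →ₗ[ℂ] WithLp 2 (H × H)) := by
      intro x
      exact ⟨(WithLp.equiv 2 (H × H)).symm (x, 0), by rw [ContinuousLinearMap.coe_coe, hA', LplusAux.D_zero]⟩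
    have her : ∀ k : ℕ, (WithLp.equiv 2 (H × H)).symm (0, e k) ∈ LinearMap.range (A : WithLp 2 (H × H) →ₗ[ℂ] WithLp 2 (H × H)) := by
      intro k
      exact ⟨(WithLp.equiv 2 (H × H)).symm (0, ((2 : ℂ) ^ (k + 1)) • e k),
        by rw [ContinuousLinearMap.coe_coe, hA', LplusAux.D_smul_basis]⟩
    set M := (LinearMap.range (A : WithLp 2 (H × H) →ₗ[ℂ] WithLp 2 (H × H))).topologicalClosure with hMdef
    have hJM : ∀ y : H, J y ∈ M := by
      have hMclosed : IsClosed (M : Set (WithLp 2 (H × H))) :=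
        Submodule.isClosed_topologicalClosure (LinearMap.range (A : WithLp 2 (H × H) →ₗ[ℂ] WithLp 2 (H × H)))
      have hSclosed : IsClosed ((M.comap (J : H →ₗ[ℂ] WithLp 2 (H × H)) : Submodule ℂ H) :
          Set H) := by
        have hpre : ((M.comap (J : H →ₗ[ℂ] WithLp 2 (H × H)) : Submodule ℂ H) :
            Set H) = ⇑J ⁻¹' (M : Set (WithLp 2 (H × H))) := rfl
        rw [hpre]
        exact hMclosed.preimage J.continuous
      have hspan : Submodule.span ℂ (Set.range e) ≤
          M.comap (J : H →ₗ[ℂ] WithLp 2 (H × H)) := by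
        rw [Submodule.span_le]
        rintro _ ⟨k, rfl⟩
        show J (e k) ∈ M
        rw [hJ]
        exact Submodule.le_topologicalClosure _ (her k)
      have h2 := Submodule.topologicalClosure_minimal _ hspan hSclosed
      rw [e.dense_span] at h2
      intro y
      exact h2 (Submodule.mem_top)
    have hM : M = ⊤ := by
      rw [eq_top_iff]
      intro p _
      rw [hp_eq p]
      have hsum : (WithLp.equiv 2 (H × H)).symm
            (((WithLp.equiv 2 (H × H)) p).1, ((WithLp.equiv 2 (H × H)) p).2)
          = (WithLp.equiv 2 (H × H)).symm (((WithLp.equiv 2 (H × H)) p).1, 0)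
            + J (((WithLp.equiv 2 (H × H)) p).2) := by
        rw [hJ]; change _ = WithLp.toLp 2 _ + WithLp.toLp 2 _
        rw [← WithLp.toLp_add, Prod.mk_add_mk, add_zero, zero_add]; rfl
      rw [hsum]
      exact M.add_mem (Submodule.le_topologicalClosure _ (hxr _)) (hJM _)
    have h1 : closure (Set.range ⇑A) = Set.univ := by
      have h2 : (M : Set (WithLp 2 (H × H))) = Set.univ := by rw [hM]; rfl
      rw [hMdef] at h2
      rwa [Submodule.topologicalClosure_coe, LinearMap.coe_range] at h2
    rw [DenseRange, dense_iff_closure_eq, h1]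
  -- P not in closure of Lplus A
  · intro hmem
    rw [Metric.mem_closure_iff] at hmem
    obtain ⟨B, hB, hdist⟩ := hmem (1/2) (by norm_num)
    obtain ⟨hBpos, c, hc, hcB⟩ := hB
    obtain ⟨k, hk⟩ := pow_unbounded_of_one_lt c (one_lt_two (α := ℝ))
    set v : WithLp 2 (H × H) := (WithLp.equiv 2 (H × H)).symm (0, e k) with hvdef
    have hv_norm : ‖v‖ = 1 := by
      rw [hvdef]; change ‖WithLp.toLp 2 ((0 : H), e k)‖ = 1; rw [WithLp.norm_toLp_snd]
      exact e.orthonormal.1 k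
    have hAv : A v = (WithLp.equiv 2 (H × H)).symm (0, ((2 : ℂ) ^ (k + 1))⁻¹ • e k) := by
      rw [hvdef, hA', LplusAux.D_basis]
    have hek : ⟪e k, e k⟫_ℂ = 1 := by
      have ho := orthonormal_iff_ite.mp e.orthonormal
      simpa using ho k k
    have hre_A : Complex.re ⟪A v, v⟫_ℂ = ((2 : ℝ) ^ (k + 1))⁻¹ := by
      rw [hAv, hvdef, hinner, inner_zero_left, inner_smul_left, hek, mul_one, zero_add]
      have h2 : (starRingEnd ℂ) ((2 : ℂ) ^ (k + 1))⁻¹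
          = ((((2 : ℝ) ^ (k + 1))⁻¹ : ℝ) : ℂ) := by
        rw [map_inv₀, map_pow, Complex.conj_ofNat]
        push_cast; ring
      rw [h2, Complex.ofReal_re]
    have hPv : P v = v := by
      have hvV : v ∈ V := by
        rw [hV, hvdef, Equiv.apply_symm_apply]
      rw [← hPrange] at hvV
      obtain ⟨w, hw⟩ := hvV
      rw [← hw, ContinuousLinearMap.coe_coe, ← ContinuousLinearMap.comp_apply, hPidem]
    have hre_P : Complex.re ⟪P v, v⟫_ℂ = 1 := by
      rw [hPv, inner_self_eq_norm_sq_to_K, hv_norm]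
      norm_num
    -- from positivity of c • A - B
    have hBle : Complex.re ⟪B v, v⟫_ℂ ≤ c * ((2 : ℝ) ^ (k + 1))⁻¹ := by
      have h0 := hcB.2 v
      rw [ContinuousLinearMap.reApplyInnerSelf, ContinuousLinearMap.sub_apply,
        ContinuousLinearMap.smul_apply, inner_sub_left] at h0
      simp only [RCLike.re_to_complex] at h0
      have hsmul : ⟪c • A v, v⟫_ℂ = (c : ℂ) * ⟪A v, v⟫_ℂ := by
        rw [show c • A v = (c : ℂ) • A v from (Complex.coe_smul c (A v)).symm,
          inner_smul_left, Complex.conj_ofReal]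
      rw [hsmul, Complex.sub_re] at h0
      have : Complex.re ((c : ℂ) * ⟪A v, v⟫_ℂ) = c * Complex.re ⟪A v, v⟫_ℂ := by
        rw [Complex.re_ofReal_mul]
      rw [this, hre_A] at h0
      linarith
    have heq : (2 : ℝ) ^ k * ((2 : ℝ) ^ (k + 1))⁻¹ = 1 / 2 := by
      rw [pow_succ]
      rw [mul_inv, ← mul_assoc, mul_inv_cancel₀ (by positivity : ((2:ℝ)^k) ≠ 0)]
      norm_num
    have hckhalf : c * ((2 : ℝ) ^ (k + 1))⁻¹ < 1 / 2 := by
      rw [← heq]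
      exact mul_lt_mul_of_pos_right hk (by positivity)
    -- bound re ⟪(P - B) v, v⟫ by the operator norm
    have hPB : Complex.re ⟪(P - B) v, v⟫_ℂ ≤ ‖P - B‖ := by
      calc Complex.re ⟪(P - B) v, v⟫_ℂ ≤ ‖⟪(P - B) v, v⟫_ℂ‖ :=
            Complex.re_le_norm _
        _ = ‖⟪(P - B) v, v⟫_ℂ‖ := rfl
        _ ≤ ‖(P - B) v‖ * ‖v‖ := norm_inner_le_norm _ _
        _ ≤ ‖P - B‖ * ‖v‖ * ‖v‖ :=
            mul_le_mul_of_nonneg_right ((P - B).le_opNorm v) (norm_nonneg v)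
        _ = ‖P - B‖ := by rw [hv_norm]; ring
    have hPBval : Complex.re ⟪(P - B) v, v⟫_ℂ = 1 - Complex.re ⟪B v, v⟫_ℂ := by
      rw [ContinuousLinearMap.sub_apply, inner_sub_left, Complex.sub_re, hre_P]
    rw [dist_eq_norm] at hdist
    rw [hPBval] at hPB
    linarith
  -- U maps V into range A
  · intro v hv
    have h1 : ((WithLp.equiv 2 (H × H)) v).1 = 0 := (hV v).mp hv
    have hv_eq : v = (WithLp.equiv 2 (H × H)).symm (0, ((WithLp.equiv 2 (H × H)) v).2) := by
      conv_lhs => rw [hp_eq v]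
      rw [h1]
    have hUv : U v = (WithLp.equiv 2 (H × H)).symm (((WithLp.equiv 2 (H × H)) v).2, 0) := by
      rw [hv_eq]
      rw [hU]
      simp
    exact ⟨U v, by rw [hUv, ContinuousLinearMap.coe_coe, hA', LplusAux.D_zero]⟩
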